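/- Let o be a compact discrete valuation ring of residue characteristic p ≠ 2, and O an unramified quadratic extension of o with the nontrivial Galois involution x ↦ x°, extended to conjugate-transpose A ↦ A° on n×n matrices. If Γ ∈ GL_n(O) satisfies Γ° = Γ (i.e., Γ is hermitian), then there exists g ∈ GL_n(O) such that Γ = g° g. Conversely, any matrix of the form g° g with g invertible is hermitian. -/

import Mathlib

open Matrix Polynomial


lemma card_le_of_pow_eq {K : Type*} [Field K] [Fintype K] [DecidableEq K] {N : ℕ} (hN : 1 < N)
    (h : ∀ x : K, x ^ N = x) : Fintype.card K ≤ N := by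
  set P : K[X] := X ^ N - X with hP
  have hPdeg : P.natDegree = N := by
    rw [hP, natDegree_sub_eq_left_of_natDegree_lt (by simpa using hN), natDegree_X_pow]
  have hPne : P ≠ 0 := fun hz => by rw [hz, natDegree_zero] at hPdeg; omega
  have hsub : (Finset.univ : Finset K) ⊆ P.roots.toFinset := by
    intro x _
    rw [Multiset.mem_toFinset, mem_roots hPne]
    simp [hP, IsRoot, h x, sub_eq_zero]
  calc Fintype.card K = (Finset.univ : Finset K).card := rfl
    _ ≤ P.roots.toFinset.card := Finset.card_le_card hsub
    _ ≤ Multiset.card P.roots := P.roots.toFinset_card_le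
    _ ≤ P.natDegree := P.card_roots'
    _ = N := hPdeg

lemma normSurj {K : Type*} [Field K] [Fintype K]
    (τ : K ≃+* K) (hτ2 : ∀ x, τ (τ x) = x) (hτne : ∃ x, τ x ≠ x) :
    ∀ a : K, a ≠ 0 → τ a = a → ∃ c : K, τ c * c = a := by
  classical
  obtain ⟨x₀, hx₀⟩ := hτne
  set F : Subfield K :=
    { carrier := {x | τ x = x}
      mul_mem' := fun {x y} hx hy => by
        simp only [Set.mem_setOf_eq, _root_.map_mul] at *; rw [hx, hy]
      one_mem' := _root_.map_one τ
      add_mem' := fun {x y} hx hy => by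
        simp only [Set.mem_setOf_eq, _root_.map_add] at *; rw [hx, hy]
      zero_mem' := _root_.map_zero τ
      neg_mem' := fun {x} hx => by
        simp only [Set.mem_setOf_eq, _root_.map_neg] at *; rw [hx]
      inv_mem' := fun x hx => by
        simp only [Set.mem_setOf_eq, map_inv₀] at *; rw [hx] } with hFdef
  haveI : Fintype F := Fintype.ofFinite F
  set q := Fintype.card F with hq
  set p := ringChar K with hp
  haveI hCharK : CharP K p := ringChar.charP K
  haveI hpP : Fact p.Prime := ⟨CharP.char_is_prime K p⟩
  haveI : CharP F p :=
    ⟨fun x => by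
      rw [← CharP.cast_eq_zero_iff K p x, ← map_natCast F.subtype x,
        map_eq_zero_iff F.subtype Subtype.coe_injective]⟩
  obtain ⟨m, hmP, hqm⟩ := FiniteField.card F p
  haveI : ExpChar K p := .prime hpP.out
  set φ : K →+* K := iterateFrobenius K p m with hφ
  have hφ_def : ∀ x : K, φ x = x ^ q := by
    intro x; rw [hφ, iterateFrobenius_def, ← hqm]
  have hfix : ∀ x : K, τ x = x → x ^ q = x := by
    intro x hx
    have : (⟨x, hx⟩ : F) ^ q = ⟨x, hx⟩ := FiniteField.pow_card _
    simpa using congrArg (Subtype.val) this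
  have h1q : 1 < q := Fintype.one_lt_card
  have hAB : ∀ x : K, x ^ q = x ∨ x ^ q = τ x := by
    intro x
    have hs : (x + τ x) ^ q = x + τ x := hfix _ (by rw [_root_.map_add, hτ2]; ring)
    have hn : (x * τ x) ^ q = x * τ x := hfix _ (by rw [_root_.map_mul, hτ2]; ring)
    have key : (x ^ q - x) * (x ^ q - τ x) = 0 := by
      have h2 : (x ^ q) ^ 2 = (x + τ x) * x ^ q - x * τ x := by
        calc (x ^ q) ^ 2 = (x ^ 2) ^ q := by ring
          _ = ((x + τ x) * x - x * τ x) ^ q := by ring_nf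
          _ = φ ((x + τ x) * x - x * τ x) := (hφ_def _).symm
          _ = φ (x + τ x) * φ x - φ (x * τ x) := by rw [_root_.map_sub, _root_.map_mul]
          _ = (x + τ x) * x ^ q - x * τ x := by
              rw [hφ_def, hφ_def, hφ_def, hs, hn]
      linear_combination h2
    rcases mul_eq_zero.mp key with h | h
    · exact Or.inl (by linear_combination h)
    · exact Or.inr (by linear_combination h)
  have hτpow : ∀ x : K, τ x = x ^ q := by
    by_cases hA : ∀ x : K, x ^ q = x
    · exfalso
      have hcard_lt : q < Fintype.card K :=
        Fintype.card_lt_of_injective_of_notMem (F.subtype) Subtype.coe_injective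
          (b := x₀) (by rintro ⟨⟨y, hy⟩, rfl⟩; exact hx₀ hy)
      have hle : Fintype.card K ≤ q := card_le_of_pow_eq h1q hA
      omega
    · push_neg at hA
      obtain ⟨y₀, hy₀⟩ := hA
      have hy₀' : y₀ ^ q = τ y₀ := (hAB y₀).resolve_left hy₀
      intro b
      rcases hAB b with hb | hb
      · have hadd : (y₀ + b) ^ q = y₀ ^ q + b ^ q := by
          rw [← hφ_def, _root_.map_add, hφ_def, hφ_def]
        rcases hAB (y₀ + b) with h | h
        · exfalso
          rw [hadd, hb] at h
          exact hy₀ (by linear_combination h)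
        · rw [hadd, hb, hy₀', _root_.map_add] at h
          rw [hb]
          linear_combination -h
      · exact hb.symm
  have hcard : Fintype.card K = q ^ 2 := by
    have hd : Fintype.card K = q ^ Module.finrank F K := Module.card_eq_pow_finrank (K := F) (V := K)
    have hup : Fintype.card K ≤ q ^ 2 := by
      refine card_le_of_pow_eq (by nlinarith) ?_
      intro x
      rw [pow_two, pow_mul, ← hτpow, ← hτpow, hτ2]
    have hlow : q < Fintype.card K :=
      Fintype.card_lt_of_injective_of_notMem (F.subtype) Subtype.coe_injective
        (b := x₀) (by rintro ⟨⟨y, hy⟩, rfl⟩; exact hx₀ hy)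
    set d := Module.finrank F K with hdd
    have hd2 : d = 2 := by
      rcases Nat.lt_or_ge d 2 with hlt | hge
      · exfalso
        have h1 : q ^ d ≤ q ^ 1 := Nat.pow_le_pow_right (by omega) (by omega)
        rw [pow_one] at h1
        omega
      · by_contra hne
        have h3 : 3 ≤ d := by omega
        have h1 : q ^ 3 ≤ q ^ d := Nat.pow_le_pow_right (by omega) h3
        have h2 : q ^ 2 < q ^ 3 := Nat.pow_lt_pow_right h1q (by omega)
        omega
    rw [hd2] at hd
    exact hd
  -- the norm argument
  intro a ha0 haf
  have haF : a ^ (q - 1) = 1 := by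
    have hane : (⟨a, haf⟩ : F) ≠ 0 := by
      intro h; exact ha0 (by simpa using congrArg Subtype.val h)
    have := FiniteField.pow_card_sub_one_eq_one (⟨a, haf⟩ : F) hane
    simpa using congrArg Subtype.val this
  obtain ⟨g, hg⟩ := IsCyclic.exists_generator (α := Kˣ)
  set ua : Kˣ := Units.mk0 a ha0 with hua_def
  obtain ⟨t, ht⟩ := Subgroup.mem_zpowers_iff.mp (hg ua)
  have horder : orderOf g = q ^ 2 - 1 := by
    rw [orderOf_eq_card_of_forall_mem_zpowers hg, Nat.card_eq_fintype_card, Fintype.card_units, hcard]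
  set e : ℕ := q - 1 with he
  have hq1 : q = e + 1 := by omega
  have h21 : q ^ 2 = (q + 1) * e + 1 := by rw [hq1]; ring
  have hua : ua ^ e = 1 := by
    ext
    push_cast
    simpa [hua_def] using haF
  have h1 : g ^ (t * (e : ℤ)) = 1 := by
    rw [_root_.zpow_mul, ht, _root_.zpow_natCast, hua]
  have h2 : ((orderOf g : ℤ)) ∣ t * e := orderOf_dvd_iff_zpow_eq_one.mpr h1
  rw [horder] at h2
  have h2' : (((q : ℤ) + 1) * e) ∣ t * e := by
    have : ((q ^ 2 - 1 : ℕ) : ℤ) = ((q : ℤ) + 1) * e := by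
      rw [show q ^ 2 - 1 = (q + 1) * e by omega]
      push_cast
      ring
    rwa [this] at h2
  have he0 : (e : ℤ) ≠ 0 := by
    have : 1 ≤ e := by omega
    exact_mod_cast Nat.one_le_iff_ne_zero.mp this
  have hqt : ((q : ℤ) + 1) ∣ t := (mul_dvd_mul_iff_right he0).mp h2'
  obtain ⟨s, hs⟩ := hqt
  refine ⟨((g ^ s : Kˣ) : K), ?_⟩
  have hc : (g ^ s : Kˣ) ^ (q + 1) = ua := by
    rw [← _root_.zpow_natCast (g ^ s) (q + 1), ← _root_.zpow_mul, mul_comm]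
    push_cast
    rw [← hs, ht]
  have hcK : ((g ^ s : Kˣ) : K) ^ (q + 1) = a := by
    simpa [hua_def] using congrArg Units.val hc
  rw [hτpow, ← pow_succ]
  exact hcK


open IsLocalRing in
lemma henselNorm {O : Type*} [CommRing O] [IsLocalRing O]
    [IsAdicComplete (maximalIdeal O) O] [Fintype (ResidueField O)]
    (h2 : IsUnit (2 : O)) (σ : O ≃+* O) (hσ : ∀ x, σ (σ x) = x)
    (hunram : ∃ x : O, residue O (σ x) ≠ residue O x)
    (a : O) (ha : IsUnit a) (haσ : σ a = a) : ∃ c : O, σ c * c = a := by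
  classical
  have hσunit : ∀ {x : O}, IsUnit (σ x) ↔ IsUnit x := by
    intro x
    constructor
    · intro h; have := h.map σ.symm; simpa using this
    · intro h; exact h.map σ
  have htop : ∀ ℓ : ℕ, ((maximalIdeal O ^ ℓ • ⊤ : Submodule O O) : Set O)
      = ((maximalIdeal O ^ ℓ : Ideal O) : Set O) := by
    intro ℓ
    rw [Ideal.smul_eq_mul, Ideal.mul_top]
  have hσm : ∀ (ℓ : ℕ) {x : O}, x ∈ maximalIdeal O ^ ℓ → σ x ∈ maximalIdeal O ^ ℓ := by
    intro ℓ x hx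
    have hmap : Ideal.map (σ : O →+* O) (maximalIdeal O) ≤ maximalIdeal O := by
      rw [Ideal.map_le_iff_le_comap]
      intro y hy
      rw [Ideal.mem_comap]
      rw [IsLocalRing.mem_maximalIdeal] at hy ⊢
      exact fun h => hy (hσunit.mp h)
    have hmap2 : Ideal.map (σ : O →+* O) (maximalIdeal O ^ ℓ) ≤ maximalIdeal O ^ ℓ := by
      rw [Ideal.map_pow]
      exact Ideal.pow_right_mono hmap ℓ
    exact hmap2 (Ideal.mem_map_of_mem _ hx)
  -- residue field
  haveI : IsLocalHom (σ : O →+* O) := ⟨fun x h => by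
    have := h.map σ.symm; simpa using this⟩
  set τ : ResidueField O ≃+* ResidueField O := ResidueField.mapEquiv σ with hτdef
  have hτres : ∀ x : O, τ (residue O x) = residue O (σ x) := fun x =>
    ResidueField.map_residue (σ : O →+* O) x
  have hτ2 : ∀ xb, τ (τ xb) = xb := by
    intro xb
    obtain ⟨x, rfl⟩ := residue_surjective (R := O) xb
    rw [hτres, hτres, hσ]
  have hτne : ∃ xb, τ xb ≠ xb := by
    obtain ⟨x, hx⟩ := hunram
    exact ⟨residue O x, by rw [hτres]; exact hx⟩
  -- initial approximation
  have hresa : residue O a ≠ 0 := (IsLocalRing.residue_ne_zero_iff_isUnit a).mpr ha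
  obtain ⟨cb, hcb⟩ := normSurj τ hτ2 hτne (residue O a) hresa (by rw [hτres, haσ])
  obtain ⟨c₀, rfl⟩ := residue_surjective (R := O) cb
  have hc₀u : IsUnit c₀ := by
    rw [← IsLocalRing.residue_ne_zero_iff_isUnit]
    intro h
    rw [h, mul_zero] at hcb
    exact hresa hcb.symm
  have hc₀m : a - σ c₀ * c₀ ∈ maximalIdeal O ^ (0 + 1) := by
    rw [zero_add, pow_one, ← IsLocalRing.residue_eq_zero_iff]
    have heq : residue O (a - σ c₀ * c₀) = residue O a - τ (residue O c₀) * residue O c₀ := by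
      rw [hτres]; simp [_root_.map_sub, _root_.map_mul]
    rw [heq, hcb, sub_self]
  -- improvement step
  have step : ∀ (ℓ : ℕ) (c : O), IsUnit c → a - σ c * c ∈ maximalIdeal O ^ (ℓ + 1) →
      ∃ c' : O, IsUnit c' ∧ (a - σ c' * c' ∈ maximalIdeal O ^ (ℓ + 2)) ∧
        c' - c ∈ maximalIdeal O ^ (ℓ + 1) := by
    intro ℓ c hc hδ
    set δ := a - σ c * c with hδdef
    have hσδ : σ δ = δ := by
      rw [hδdef, _root_.map_sub, _root_.map_mul, haσ, hσ, mul_comm]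
    have hσc : IsUnit (σ c) := hσunit.mpr hc
    set u := (h2.mul hσc).unit with hu
    set v := ((u⁻¹ : Oˣ) : O) with hv
    have huv : (2 * σ c) * v = 1 := by
      rw [hv, hu]
      exact_mod_cast u.mul_inv
    have hσuv : (2 * c) * σ v = 1 := by
      have := congrArg σ huv
      rw [_root_.map_mul, _root_.map_mul, _root_.map_one, hσ] at this
      simpa [map_ofNat] using this
    set e := δ * v with he
    have hσe : σ e = δ * σ v := by rw [he, _root_.map_mul, hσδ]
    have hX : c * σ v + σ c * v = 1 := by
      refine h2.mul_left_cancel ?_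
      have h1 : (2 : O) * (c * σ v) = 1 := by linear_combination hσuv
      have h2' : (2 : O) * (σ c * v) = 1 := by linear_combination huv
      calc (2:O) * (c * σ v + σ c * v) = 2 * (c * σ v) + 2 * (σ c * v) := by ring
        _ = 1 + 1 := by rw [h1, h2']
        _ = 2 * 1 := by ring
    have hexp : a - σ (c + e) * (c + e) = -(σ e * e) := by
      have h1 : σ (c + e) = σ c + δ * σ v := by rw [_root_.map_add, hσe]
      rw [h1, hσe, he]
      linear_combination (-1 : O) * hδdef - δ * hX
    have hmem2 : σ e * e ∈ maximalIdeal O ^ (ℓ + 2) := by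
      have he1 : e ∈ maximalIdeal O ^ (ℓ + 1) := by
        rw [he]; exact Ideal.mul_mem_right _ _ hδ
      have he2 : σ e ∈ maximalIdeal O ^ (ℓ + 1) := by
        rw [hσe]; exact Ideal.mul_mem_right _ _ hδ
      have := Ideal.mul_mem_mul he2 he1
      rw [← pow_add] at this
      exact Ideal.pow_le_pow_right (by omega) this
    refine ⟨c + e, ?_, ?_, ?_⟩
    · by_contra hcu
      rw [← mem_nonunits_iff, ← IsLocalRing.mem_maximalIdeal] at hcu
      have hem : e ∈ maximalIdeal O := Ideal.pow_le_self (n := ℓ + 1) (Nat.succ_ne_zero ℓ)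
        (by rw [he]; exact Ideal.mul_mem_right _ _ hδ)
      have : c ∈ maximalIdeal O := by
        have := Ideal.sub_mem _ hcu hem
        simpa using this
      exact (mem_nonunits_iff.mp ((IsLocalRing.mem_maximalIdeal c).mp this)) hc
    · rw [hexp]
      exact Submodule.neg_mem _ hmem2
    · simpa using (by rw [he]; exact Ideal.mul_mem_right _ _ hδ :
        e ∈ maximalIdeal O ^ (ℓ + 1))
  -- build the sequence
  choose next hnext1 hnext2 hnext3 using step
  let T : ℕ → Type _ := fun ℓ => {c : O // IsUnit c ∧ a - σ c * c ∈ maximalIdeal O ^ (ℓ + 1)}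
  let seq : ∀ ℓ : ℕ, T ℓ := fun ℓ => Nat.rec (motive := T)
    ⟨c₀, hc₀u, hc₀m⟩
    (fun ℓ ih => ⟨next ℓ ih.1 ih.2.1 ih.2.2,
      hnext1 ℓ ih.1 ih.2.1 ih.2.2, hnext2 ℓ ih.1 ih.2.1 ih.2.2⟩) ℓ
  set f : ℕ → O := fun ℓ => (seq ℓ).1 with hf
  have hfu : ∀ ℓ, IsUnit (f ℓ) := fun ℓ => (seq ℓ).2.1
  have hfm : ∀ ℓ, a - σ (f ℓ) * f ℓ ∈ maximalIdeal O ^ (ℓ + 1) := fun ℓ => (seq ℓ).2.2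
  have hdiff : ∀ ℓ, f (ℓ + 1) - f ℓ ∈ maximalIdeal O ^ (ℓ + 1) := fun ℓ =>
    hnext3 ℓ (seq ℓ).1 (seq ℓ).2.1 (seq ℓ).2.2
  have hcauchy : ∀ {i j : ℕ}, i ≤ j → f j - f i ∈ maximalIdeal O ^ i := by
    intro i j hij
    induction j with
    | zero =>
      have : i = 0 := by omega
      subst this
      simpa using (Submodule.zero_mem _)
    | succ j ih =>
      rcases Nat.lt_or_ge i (j + 1) with hlt | hge
      · have h1 : f (j + 1) - f j ∈ maximalIdeal O ^ i :=
          Ideal.pow_le_pow_right (by omega) (hdiff j)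
        have h2' : f j - f i ∈ maximalIdeal O ^ i := ih (by omega)
        have := Submodule.add_mem _ h1 h2'
        simpa using this
      · have : i = j + 1 := by omega
        subst this
        simpa using (Submodule.zero_mem _)
  have hsmod : ∀ {i j : ℕ}, i ≤ j →
      f i ≡ f j [SMOD (maximalIdeal O ^ i • ⊤ : Submodule O O)] := by
    intro i j hij
    rw [SModEq.sub_mem]
    have : f i - f j = -(f j - f i) := by ring
    rw [this]
    have hmem := Submodule.neg_mem _ (hcauchy hij)
    have hset := htop i
    exact by
      have : ((maximalIdeal O ^ i • ⊤ : Submodule O O) : Set O)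
          = ((maximalIdeal O ^ i : Ideal O) : Set O) := hset
      exact (Set.ext_iff.mp this _).mpr hmem
  obtain ⟨L, hL⟩ := IsPrecomplete.prec inferInstance (fun {i j} h => hsmod h)
  refine ⟨L, ?_⟩
  have hfinal : ∀ n : ℕ, σ L * L - a ∈ maximalIdeal O ^ n := by
    intro n
    have h1 : f n - L ∈ maximalIdeal O ^ n := by
      have := hL n
      rw [SModEq.sub_mem] at this
      exact (Set.ext_iff.mp (htop n) _).mp this
    have h2' : σ (f n) - σ L ∈ maximalIdeal O ^ n := by
      have := hσm n h1
      rwa [_root_.map_sub] at this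
    have hkey : σ L * L - a = (σ L - σ (f n)) * L + σ (f n) * (L - f n)
        - (a - σ (f n) * f n) := by ring
    rw [hkey]
    refine Submodule.sub_mem _ (Submodule.add_mem _ ?_ ?_) ?_
    · exact Ideal.mul_mem_right _ _ (by
        have := Submodule.neg_mem _ h2'
        simpa using this)
    · exact Ideal.mul_mem_left _ _ (by
        have := Submodule.neg_mem _ h1
        simpa using this)
    · exact Ideal.pow_le_pow_right (by omega) (hfm n)
  have hzero : σ L * L - a = 0 := by
    refine IsHausdorff.haus (inferInstance : IsHausdorff (maximalIdeal O) O) (σ L * L - a) (fun n => ?_)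
    rw [SModEq.zero]
    exact (Set.ext_iff.mp (htop n) _).mpr (hfinal n)
  exact sub_eq_zero.mp hzero


section CT
variable {O : Type*} [CommRing O] (σ : O ≃+* O) {n : Type*} [Fintype n] [DecidableEq n]

omit [DecidableEq n] in
private lemma ct_mul (A B : Matrix n n O) :
    ((A * B).map σ)ᵀ = ((B.map σ)ᵀ) * ((A.map σ)ᵀ) := by
  ext i j
  show σ ((A * B) j i) = _
  rw [Matrix.mul_apply, Matrix.mul_apply, _root_.map_sum]
  exact Finset.sum_congr rfl fun k _ => by
    show σ (A j k * B k i) = σ (B k i) * σ (A j k)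
    rw [_root_.map_mul, mul_comm]

omit [Fintype n] [DecidableEq n] in
private lemma ct_ct (hσ : ∀ x, σ (σ x) = x) (A : Matrix n n O) :
    (((A.map σ)ᵀ).map σ)ᵀ = A := by
  ext i j
  show σ (σ (A i j)) = A i j
  exact hσ _

omit [Fintype n] in
private lemma ct_one : (((1 : Matrix n n O)).map σ)ᵀ = 1 := by
  ext i j
  show σ ((1 : Matrix n n O) j i) = (1 : Matrix n n O) i j
  by_cases h : i = j
  · subst h; simp
  · rw [Matrix.one_apply_ne' h, Matrix.one_apply_ne h, _root_.map_zero]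

private lemma ct_isUnit {A : Matrix n n O} (hA : IsUnit A) : IsUnit ((A.map σ)ᵀ) := by
  obtain ⟨u, rfl⟩ := hA
  exact ⟨⟨((u : Matrix n n O).map σ)ᵀ, (((↑u⁻¹ : Matrix n n O)).map σ)ᵀ,
    by rw [← ct_mul, u.inv_mul, ct_one],
    by rw [← ct_mul, u.mul_inv, ct_one]⟩, rfl⟩

end CT

open IsLocalRing in
private lemma herm_decomp {O : Type*} [CommRing O] [IsLocalRing O]
    (h2 : IsUnit (2 : O)) (σ : O ≃+* O) (hσ : ∀ x, σ (σ x) = x)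
    (hnorm : ∀ a : O, IsUnit a → σ a = a → ∃ c : O, σ c * c = a) :
    ∀ (n : ℕ) (Γ : Matrix (Fin n) (Fin n) O), IsUnit Γ → (Γ.map σ)ᵀ = Γ →
      ∃ g : Matrix (Fin n) (Fin n) O, Γ = (g.map σ)ᵀ * g := by
  intro N
  induction N with
  | zero => intro Γ _ _; exact ⟨0, Subsingleton.elim _ _⟩
  | succ n IH =>
    have hconj : ∀ (Γ P : Matrix (Fin (n+1)) (Fin (n+1)) O), (Γ.map σ)ᵀ = Γ →
        (((((P.map σ)ᵀ) * Γ * P).map σ)ᵀ) = ((P.map σ)ᵀ) * Γ * P := by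
      intro Γ P hherm
      rw [ct_mul, ct_mul, ct_ct σ hσ, hherm, Matrix.mul_assoc]
    have recover : ∀ (Γ Δ P h : Matrix (Fin (n+1)) (Fin (n+1)) O), IsUnit P →
        Δ = ((P.map σ)ᵀ) * Γ * P → Δ = ((h.map σ)ᵀ) * h →
        ∃ g : Matrix (Fin (n+1)) (Fin (n+1)) O, Γ = ((g.map σ)ᵀ) * g := by
      intro Γ Δ P h hPu hΔ hfac
      obtain ⟨u, rfl⟩ := hPu
      set P : Matrix (Fin (n+1)) (Fin (n+1)) O := ↑u with hPdef
      set Q : Matrix (Fin (n+1)) (Fin (n+1)) O := ↑u⁻¹ with hQdef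
      have hq1 : P * Q = 1 := u.mul_inv
      refine ⟨h * Q, ?_⟩
      have hstep : ((Q.map σ)ᵀ) * Δ * Q = Γ := by
        rw [hΔ]
        have hh : ((Q.map σ)ᵀ) * (((P.map σ)ᵀ) * Γ * P) * Q
            = (((P * Q).map σ)ᵀ) * Γ * (P * Q) := by
          rw [ct_mul]
          noncomm_ring
        rw [hh, hq1, ct_one, Matrix.one_mul, Matrix.mul_one]
      rw [← hstep, hfac, ct_mul]
      noncomm_ring
    -- the elimination step, assuming unit pivot at (0,0)
    have key : ∀ (Δ : Matrix (Fin (n+1)) (Fin (n+1)) O), IsUnit Δ → ((Δ.map σ)ᵀ = Δ) →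
        IsUnit (Δ 0 0) → ∃ h : Matrix (Fin (n+1)) (Fin (n+1)) O, Δ = ((h.map σ)ᵀ) * h := by
      intro Δ hΔ hDh ha
      have hH : ∀ i j, σ (Δ j i) = Δ i j := fun i j => congrFun (congrFun hDh i) j
      obtain ⟨b, hb⟩ := ha.exists_right_inv
      have hσa : σ (Δ 0 0) = Δ 0 0 := hH 0 0
      have hσb : σ b = b := by
        have h1 : Δ 0 0 * σ b = 1 := by
          have := congrArg σ hb
          rw [_root_.map_mul, _root_.map_one, hσa] at this
          exact this
        calc σ b = (b * Δ 0 0) * σ b := by rw [mul_comm b, hb, one_mul]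
          _ = b * (Δ 0 0 * σ b) := by ring
          _ = b := by rw [h1, mul_one]
      set L : Matrix (Fin (n+1)) (Fin (n+1)) O :=
        Matrix.of (fun i j => if i = 0 then b * Δ 0 j else if i = j then 1 else 0) with hLdef
      set D : Matrix (Fin (n+1)) (Fin (n+1)) O :=
        Matrix.of (fun i j => if i = 0 ∨ j = 0 then (if i = 0 ∧ j = 0 then Δ 0 0 else 0)
          else Δ i j - Δ i 0 * b * Δ 0 j) with hDdef
      have hD00 : D 0 0 = Δ 0 0 := by rw [hDdef]; simp
      have hD0s : ∀ j' : Fin n, D 0 j'.succ = 0 := fun j' => by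
        rw [hDdef]; simp [Fin.succ_ne_zero]
      have hDs0 : ∀ i' : Fin n, D i'.succ 0 = 0 := fun i' => by
        rw [hDdef]; simp [Fin.succ_ne_zero]
      have hDss : ∀ i' j' : Fin n, D i'.succ j'.succ
          = Δ i'.succ j'.succ - Δ i'.succ 0 * b * Δ 0 j'.succ := fun i' j' => by
        rw [hDdef]; simp [Fin.succ_ne_zero]
      have hL0 : ∀ j, L 0 j = b * Δ 0 j := fun j => by rw [hLdef]; simp
      have hLsucc : ∀ (k' : Fin n) j, L k'.succ j = if k'.succ = j then 1 else 0 :=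
        fun k' j => by rw [hLdef]; simp [Fin.succ_ne_zero]
      have hLs : ∀ i j, ((L.map σ)ᵀ) i j = if j = 0 then b * Δ i 0
          else if j = i then 1 else 0 := by
        intro i j
        show σ (L j i) = _
        rw [hLdef]
        by_cases hj : j = 0
        · subst hj
          simp only [Matrix.of_apply, eq_self_iff_true, if_true, _root_.map_mul, hσb, hH]
        · simp only [Matrix.of_apply, if_neg hj, apply_ite σ, _root_.map_one, _root_.map_zero]
      have hDL : ∀ i j, (D * L) i j = if i = 0 then Δ 0 j
          else if j = 0 then 0 else Δ i j - Δ i 0 * b * Δ 0 j := by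
        intro i j
        rw [Matrix.mul_apply, Fin.sum_univ_succ]
        simp only [hL0, hLsucc]
        induction i using Fin.cases with
        | zero =>
          rw [hD00]
          rw [Finset.sum_eq_zero (fun k' _ => by rw [hD0s, zero_mul])]
          rw [add_zero, if_pos rfl, ← mul_assoc, hb, one_mul]
        | succ i' =>
          rw [hDs0 i', zero_mul, zero_add, if_neg (Fin.succ_ne_zero i')]
          induction j using Fin.cases with
          | zero =>
            rw [if_pos rfl]
            exact Finset.sum_eq_zero (fun k' _ => by
              rw [if_neg (Fin.succ_ne_zero k'), mul_zero])
          | succ j' =>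
            rw [if_neg (Fin.succ_ne_zero j')]
            have hcollapse : ∀ k' : Fin n,
                D i'.succ k'.succ * (if k'.succ = j'.succ then 1 else 0)
                = if k' = j' then D i'.succ k'.succ else 0 := by
              intro k'
              by_cases hkj : k' = j'
              · subst hkj; simp
              · rw [if_neg (fun h => hkj (Fin.succ_injective _ h)), if_neg hkj, mul_zero]
            rw [Finset.sum_congr rfl fun k' _ => hcollapse k',
              Finset.sum_ite_eq' Finset.univ j']
            rw [if_pos (Finset.mem_univ j'), hDss]
      have hfact : Δ = ((L.map σ)ᵀ) * (D * L) := by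
        ext i j
        rw [Matrix.mul_apply, Fin.sum_univ_succ]
        simp only [hLs, hDL]
        induction i using Fin.cases with
        | zero =>
          simp only [if_true, Fin.succ_ne_zero, if_false, zero_mul, Finset.sum_const_zero,
            add_zero]
          linear_combination (-(Δ 0 j)) * hb
        | succ i' =>
          simp only [if_true, Fin.succ_ne_zero, if_false, Fin.succ_inj, ite_mul, one_mul,
            zero_mul]
          rw [Finset.sum_ite_eq' Finset.univ i', if_pos (Finset.mem_univ i')]
          by_cases hj : j = 0
          · subst hj
            simp only [if_true, eq_self_iff_true, add_zero]
            linear_combination (-(Δ i'.succ 0)) * hb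
          · rw [if_neg hj]
            ring
      -- units
      have hdetLDL : IsUnit (((L.map σ)ᵀ).det * (D.det * L.det)) := by
        have hdetΔ := (Matrix.isUnit_iff_isUnit_det _).mp hΔ
        rwa [hfact, Matrix.det_mul, Matrix.det_mul] at hdetΔ
      have hdetD : IsUnit D.det :=
        isUnit_of_mul_isUnit_left (isUnit_of_mul_isUnit_right hdetLDL)
      have hdetDval : D.det = Δ 0 0 * (D.submatrix Fin.succ Fin.succ).det := by
        rw [Matrix.det_succ_row_zero, Fin.sum_univ_succ]
        rw [Finset.sum_eq_zero (fun j' _ => by rw [hD0s]; ring)]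
        rw [add_zero, hD00]
        simp [Fin.succAbove_zero]
      have hsubunit : IsUnit (D.submatrix Fin.succ Fin.succ) := by
        rw [Matrix.isUnit_iff_isUnit_det]
        rw [hdetDval] at hdetD
        exact isUnit_of_mul_isUnit_right hdetD
      have hherm₂ : ((D.submatrix Fin.succ Fin.succ).map σ)ᵀ
          = D.submatrix Fin.succ Fin.succ := by
        ext i' j'
        show σ (D j'.succ i'.succ) = D i'.succ j'.succ
        rw [hDss, hDss, _root_.map_sub, _root_.map_mul, _root_.map_mul, hσb, hH, hH, hH]
        ring
      obtain ⟨h₂, hfac₂⟩ := IH _ hsubunit hherm₂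
      obtain ⟨c, hc⟩ := hnorm (Δ 0 0) ha hσa
      set h : Matrix (Fin (n+1)) (Fin (n+1)) O := Matrix.of (fun i j =>
        Fin.cases (Fin.cases c (fun _ => (0:O)) j)
          (fun i' => Fin.cases (0:O) (fun j' => h₂ i' j') j) i) with hhdef
      have hh00 : h 0 0 = c := by rw [hhdef]; simp
      have hh0s : ∀ j' : Fin n, h 0 j'.succ = 0 := fun j' => by rw [hhdef]; simp
      have hhs0 : ∀ i' : Fin n, h i'.succ 0 = 0 := fun i' => by rw [hhdef]; simp
      have hhss : ∀ i' j' : Fin n, h i'.succ j'.succ = h₂ i' j' := fun i' j' => by rw [hhdef]; simp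
      have hDfac : D = ((h.map σ)ᵀ) * h := by
        ext i j
        rw [Matrix.mul_apply, Fin.sum_univ_succ]
        simp only [Matrix.transpose_apply, Matrix.map_apply]
        induction i using Fin.cases with
        | zero =>
          induction j using Fin.cases with
          | zero =>
            rw [hh00, hD00, ← hc]
            rw [Finset.sum_eq_zero (fun k' _ => by rw [hhs0, mul_zero])]
            rw [add_zero]
          | succ j' =>
            rw [hh0s, mul_zero, hD0s]
            rw [Finset.sum_eq_zero (fun k' _ => by
              rw [hhs0, _root_.map_zero, zero_mul])]
            rw [add_zero]
        | succ i' =>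
          induction j using Fin.cases with
          | zero =>
            rw [hh0s, _root_.map_zero, zero_mul, zero_add, hDs0]
            exact (Finset.sum_eq_zero (fun k' _ => by rw [hhs0, mul_zero])).symm
          | succ j' =>
            rw [hh0s, _root_.map_zero, zero_mul, zero_add]
            have hsum : (D.submatrix Fin.succ Fin.succ) i' j'
                = ∑ k' : Fin n, σ (h₂ k' i') * h₂ k' j' := by
              rw [hfac₂, Matrix.mul_apply]
              simp only [Matrix.transpose_apply, Matrix.map_apply]
            have hDss' : D i'.succ j'.succ = (D.submatrix Fin.succ Fin.succ) i' j' := rfl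
            rw [hDss', hsum]
            exact Finset.sum_congr rfl fun k' _ => by rw [hhss, hhss]
      refine ⟨h * L, ?_⟩
      have hassoc : (((L.map σ)ᵀ) * ((h.map σ)ᵀ)) * (h * L)
          = ((L.map σ)ᵀ) * ((((h.map σ)ᵀ) * h) * L) := by noncomm_ring
      rw [ct_mul, hassoc, ← hDfac]
      exact hfact
    -- now the main argument
    intro Γ hΓ hherm
    have hH : ∀ i j, σ (Γ j i) = Γ i j := fun i j => congrFun (congrFun hherm i) j
    -- Stage 1 : make some diagonal entry a unit
    obtain ⟨i, P₁, hP₁, hΔ₁herm, hΔ₁u, hΔ₁piv⟩ :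
        ∃ (i : Fin (n+1)) (P₁ : Matrix (Fin (n+1)) (Fin (n+1)) O), IsUnit P₁ ∧
          (((((P₁.map σ)ᵀ) * Γ * P₁).map σ)ᵀ = ((P₁.map σ)ᵀ) * Γ * P₁) ∧
          IsUnit (((P₁.map σ)ᵀ) * Γ * P₁) ∧
          IsUnit ((((P₁.map σ)ᵀ) * Γ * P₁) i i) := by
      by_cases hdiag : ∃ i, IsUnit (Γ i i)
      · obtain ⟨i, hi⟩ := hdiag
        refine ⟨i, 1, isUnit_one, ?_, ?_, ?_⟩ <;>
          rw [ct_one, Matrix.one_mul, Matrix.mul_one]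
        · exact hherm
        · exact hΓ
        · exact hi
      · push_neg at hdiag
        have hoff : ∃ i j, IsUnit (Γ i j) := by
          by_contra hno
          push_neg at hno
          have hdet : Γ.det ∈ maximalIdeal O := by
            rw [Matrix.det_apply']
            refine Ideal.sum_mem _ fun τp _ => Ideal.mul_mem_left _ _ ?_
            rw [← Finset.mul_prod_erase Finset.univ _ (Finset.mem_univ (0 : Fin (n+1)))]
            exact Ideal.mul_mem_right _ _
              ((IsLocalRing.mem_maximalIdeal _).mpr (mem_nonunits_iff.mpr (hno _ _)))
          exact mem_nonunits_iff.mp ((IsLocalRing.mem_maximalIdeal _).mp hdet)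
            ((Matrix.isUnit_iff_isUnit_det _).mp hΓ)
        obtain ⟨i, j, hij_unit⟩ := hoff
        have hij : i ≠ j := by rintro rfl; exact hdiag i hij_unit
        obtain ⟨b, hb⟩ := hij_unit.exists_right_inv
        have hPct : (((1 + Matrix.single j i b).map σ)ᵀ)
            = 1 + Matrix.single i j (σ b) := by
          ext a b'
          show σ ((1 + Matrix.single j i b) b' a) = _
          rw [Matrix.add_apply, Matrix.add_apply, _root_.map_add]
          congr 1
          · show σ ((1 : Matrix (Fin (n+1)) (Fin (n+1)) O) b' a)
              = (1 : Matrix (Fin (n+1)) (Fin (n+1)) O) a b'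
            by_cases hab : a = b'
            · subst hab; simp
            · rw [Matrix.one_apply_ne' hab, Matrix.one_apply_ne hab, _root_.map_zero]
          · show σ (Matrix.single j i b b' a) = Matrix.single i j (σ b) a b'
            by_cases hcond : b' = j ∧ a = i
            · obtain ⟨h1, h2⟩ := hcond
              subst h1; subst h2
              simp
            · rw [Matrix.single_apply_of_ne _ _ _ _ _ (fun hh => hcond ⟨hh.1.symm, hh.2.symm⟩),
                Matrix.single_apply_of_ne _ _ _ _ _
                  (fun hh => hcond ⟨hh.2.symm, hh.1.symm⟩), _root_.map_zero]
        have hPu : IsUnit (1 + Matrix.single j i b) := by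
          rw [Matrix.isUnit_iff_isUnit_det, ← Matrix.transvection,
            Matrix.det_transvection_of_ne j i (Ne.symm hij) b]
          exact isUnit_one
        refine ⟨i, 1 + Matrix.single j i b, hPu, hconj Γ _ hherm,
          (((ct_isUnit σ hPu).mul hΓ).mul hPu), ?_⟩
        have hexp : ((((1 + Matrix.single j i b).map σ)ᵀ) * Γ
            * (1 + Matrix.single j i b)) i i
            = Γ i i + 1 + (1 + σ b * (Γ j j * b)) := by
          rw [hPct]
          have hdist : (1 + Matrix.single i j (σ b)) * Γ
              * (1 + Matrix.single j i b)
              = Γ + Γ * Matrix.single j i b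
                + (Matrix.single i j (σ b) * Γ
                  + Matrix.single i j (σ b) * (Γ * Matrix.single j i b)) := by
            noncomm_ring
          rw [hdist, Matrix.add_apply, Matrix.add_apply, Matrix.add_apply]
          rw [Matrix.mul_single_apply_same,
            Matrix.single_mul_apply_same,
            Matrix.single_mul_apply_same,
            Matrix.mul_single_apply_same]
          rw [hb]
          have hone : σ b * Γ j i = 1 := by
            rw [← hH j i, ← _root_.map_mul, mul_comm, hb, _root_.map_one]
          rw [hone]
        rw [hexp]
        by_contra hu
        have hmem : Γ i i + 1 + (1 + σ b * (Γ j j * b)) ∈ maximalIdeal O :=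
          (IsLocalRing.mem_maximalIdeal _).mpr (mem_nonunits_iff.mpr hu)
        have h2mem : (2 : O) ∈ maximalIdeal O := by
          have hii : Γ i i ∈ maximalIdeal O :=
            (IsLocalRing.mem_maximalIdeal _).mpr (mem_nonunits_iff.mpr (hdiag i))
          have hjj : σ b * (Γ j j * b) ∈ maximalIdeal O :=
            Ideal.mul_mem_left _ _ (Ideal.mul_mem_right _ _
              ((IsLocalRing.mem_maximalIdeal _).mpr (mem_nonunits_iff.mpr (hdiag j))))
          have heq : (2 : O) = (Γ i i + 1 + (1 + σ b * (Γ j j * b))) - Γ i i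
              - σ b * (Γ j j * b) := by ring
          rw [heq]
          exact Ideal.sub_mem _ (Ideal.sub_mem _ hmem hii) hjj
        exact mem_nonunits_iff.mp ((IsLocalRing.mem_maximalIdeal _).mp h2mem) h2
    -- Stage 2 : swap the pivot to position 0
    set Δ₁ : Matrix (Fin (n+1)) (Fin (n+1)) O := ((P₁.map σ)ᵀ) * Γ * P₁ with hΔ₁def
    set e : Equiv.Perm (Fin (n+1)) := Equiv.swap 0 i with hedef
    have hswap_invol : ∀ x, e (e x) = x := fun x => Equiv.swap_apply_self _ _ x
    set P₂ : Matrix (Fin (n+1)) (Fin (n+1)) O :=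
      Matrix.of (fun a b => if a = e b then 1 else 0) with hP₂def
    have hP₂ct : ((P₂.map σ)ᵀ) = P₂ := by
      ext a b'
      show σ (P₂ b' a) = P₂ a b'
      rw [hP₂def]
      simp only [Matrix.of_apply, apply_ite σ, _root_.map_one, _root_.map_zero]
      by_cases hcond : b' = e a
      · rw [if_pos hcond, if_pos (by rw [hcond, hswap_invol])]
      · rw [if_neg hcond, if_neg (fun hh => hcond (by rw [hh, hswap_invol]))]
    have hright : ∀ (M : Matrix (Fin (n+1)) (Fin (n+1)) O) a b',
        (M * P₂) a b' = M a (e b') := by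
      intro M a b'
      rw [Matrix.mul_apply, hP₂def]
      simp only [Matrix.of_apply, mul_ite, mul_one, mul_zero]
      rw [Finset.sum_ite_eq' Finset.univ (e b'), if_pos (Finset.mem_univ _)]
    have hleft : ∀ (M : Matrix (Fin (n+1)) (Fin (n+1)) O) a b',
        (P₂ * M) a b' = M (e a) b' := by
      intro M a b'
      rw [Matrix.mul_apply, hP₂def]
      simp only [Matrix.of_apply, ite_mul, one_mul, zero_mul]
      have hc : ∀ k, (if a = e k then M k b' else 0) = (if k = e a then M k b' else 0) := by
        intro k
        by_cases hk : k = e a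
        · rw [if_pos hk, if_pos (by rw [hk, hswap_invol])]
        · rw [if_neg hk, if_neg (fun hh => hk (by rw [hh, hswap_invol]))]
      rw [Finset.sum_congr rfl fun k _ => hc k,
        Finset.sum_ite_eq' Finset.univ (e a), if_pos (Finset.mem_univ _)]
    have hP₂mul : P₂ * P₂ = 1 := by
      ext a b'
      rw [hleft, hP₂def]
      simp only [Matrix.of_apply]
      by_cases hab : a = b'
      · subst hab
        rw [if_pos rfl, Matrix.one_apply_eq]
      · rw [if_neg (fun hh => hab (e.injective hh)), Matrix.one_apply_ne hab]
    have hP₂u : IsUnit P₂ := ⟨⟨P₂, P₂, hP₂mul, hP₂mul⟩, rfl⟩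
    have hsub : ((P₂.map σ)ᵀ) * Δ₁ * P₂ = Δ₁.submatrix e e := by
      rw [hP₂ct]
      ext a b'
      rw [hright, hleft, Matrix.submatrix_apply]
    -- apply the elimination step
    have hΔ₂u : IsUnit (Δ₁.submatrix e e) := by
      have : IsUnit (((P₂.map σ)ᵀ) * Δ₁ * P₂) := ((ct_isUnit σ hP₂u).mul hΔ₁u).mul hP₂u
      rwa [hsub] at this
    have hΔ₂herm : ((Δ₁.submatrix e e).map σ)ᵀ = Δ₁.submatrix e e := by
      have := hconj Δ₁ P₂ hΔ₁herm
      rwa [hsub] at this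
    have hΔ₂piv : IsUnit ((Δ₁.submatrix ⇑e ⇑e) 0 0) := by
      rw [Matrix.submatrix_apply, hedef, Equiv.swap_apply_left]
      exact hΔ₁piv
    obtain ⟨h, hfach⟩ := key (Δ₁.submatrix e e) hΔ₂u hΔ₂herm hΔ₂piv
    have hcomb : Δ₁.submatrix ⇑e ⇑e = (((P₁ * P₂).map σ)ᵀ) * Γ * (P₁ * P₂) := by
      rw [ct_mul, ← hsub, hΔ₁def]
      noncomm_ring
    exact recover Γ (Δ₁.submatrix e e) (P₁ * P₂) h (hP₁.mul hP₂u) hcomb hfach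


/-- **Hermitian matrices over an unramified quadratic extension are of the form `g° g`.**
`O` is a complete discrete valuation ring with finite residue field of odd characteristic
(i.e. `2` is a unit), equipped with an involutive ring automorphism `σ` inducing a nontrivial
automorphism of the residue field (so that `O` is an unramified quadratic extension of the
fixed ring `o` and `σ` is the nontrivial Galois automorphism).  Writing `M° = (M.map σ)ᵀ` for
the conjugate transpose, an invertible matrix `Γ ∈ GL_n(O)` is hermitian (`Γ° = Γ`) if and
only if there is an invertible `g` with `Γ = g° g`; in particular any `g° g` with `g`
invertible is hermitian. -/
theorem hermitian_iff_exists_conjTranspose_mul_self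
    (O : Type*) [CommRing O] [IsDomain O] [IsDiscreteValuationRing O]
    [IsAdicComplete (IsLocalRing.maximalIdeal O) O]
    [Fintype (IsLocalRing.ResidueField O)]
    (h2 : IsUnit (2 : O))
    (σ : O ≃+* O) (hσ : ∀ x, σ (σ x) = x)
    (hunram : ∃ x : O, IsLocalRing.residue O (σ x) ≠ IsLocalRing.residue O x)
    (n : ℕ) (Γ : Matrix (Fin n) (Fin n) O) (hΓ : IsUnit Γ) :
    (Γ.map σ)ᵀ = Γ ↔
      ∃ g : Matrix (Fin n) (Fin n) O, IsUnit g ∧ Γ = (g.map σ)ᵀ * g := by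
  constructor
  · intro hherm
    obtain ⟨g, hg⟩ := herm_decomp h2 σ hσ
      (fun a ha haσ => henselNorm h2 σ hσ hunram a ha haσ) n Γ hΓ hherm
    refine ⟨g, ?_, hg⟩
    have hdet : IsUnit (((g.map σ)ᵀ).det * g.det) := by
      have := (Matrix.isUnit_iff_isUnit_det _).mp hΓ
      rwa [hg, Matrix.det_mul] at this
    exact (Matrix.isUnit_iff_isUnit_det _).mpr (isUnit_of_mul_isUnit_right hdet)
  · rintro ⟨g, hg, rfl⟩
    ext i j
    show σ (((g.map σ)ᵀ * g) j i) = ((g.map σ)ᵀ * g) i j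
    rw [Matrix.mul_apply, Matrix.mul_apply, _root_.map_sum]
    refine Finset.sum_congr rfl fun k _ => ?_
    show σ (σ (g k j) * g k i) = σ (g k i) * g k j
    rw [_root_.map_mul, hσ, mul_comm]
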